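/- Let Q ⊆ ℝᴺ be a measurable set of finite measure, and let p, G : I → ℝ be nondecreasing continuous functions on an interval I ⊆ ℝ. Suppose (ϱ_n) is a sequence of measurable functions Q → I such that p(ϱ_n) ⇀ P̄, G(ϱ_n) ⇀ Ḡ, and p(ϱ_n)G(ϱ_n) ⇀ H̄ weakly in L¹(Q). Then P̄·Ḡ ≤ H̄ almost everywhere on Q. -/

import Mathlib

open MeasureTheory Filter Topology

/-- Helper: split an integral of `A - d*B - c*C + c*d` into pieces. -/
lemma aux_split {X : Type*} [MeasurableSpace X] (ν : Measure X) [IsFiniteMeasure ν]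
    (A B C : X → ℝ) (c d : ℝ)
    (hA : Integrable A ν) (hB : Integrable B ν) (hC : Integrable C ν) :
    ∫ x, (A x - d * B x - c * C x + c * d) ∂ν
      = ∫ x, A x ∂ν - d * ∫ x, B x ∂ν - c * ∫ x, C x ∂ν + c * d * (ν Set.univ).toReal := by
  have h1 : Integrable (fun x => A x - d * B x - c * C x) ν := by
    exact (hA.sub (hB.const_mul d)).sub (hC.const_mul c)
  have h2 : Integrable (fun x => A x - d * B x) ν := by
    exact hA.sub (hB.const_mul d)
  have h3 : Integrable (fun x => d * B x) ν := hB.const_mul d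
  have h4 : Integrable (fun x => c * C x) ν := hC.const_mul c
  rw [integral_add h1 (integrable_const _), integral_sub h2 h4,
      integral_sub hA h3, integral_const_mul, integral_const_mul, integral_const]
  simp [smul_eq_mul, Measure.real]
  ring

/-- Helper: a weak-L¹ limit of functions bounded below by `c` is a.e. bounded below by `c`. -/
lemma aux_ae_ge {X : Type*} [MeasurableSpace X] (μ : Measure X) [IsFiniteMeasure μ]
    (f : ℕ → X → ℝ) (fbar : X → ℝ) (hfbar : Integrable fbar μ)
    (c : ℝ) (hc : ∀ n x, c ≤ f n x)
    (hfi : ∀ n, Integrable (f n) μ)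
    (hconv : ∀ E, MeasurableSet E →
      Tendsto (fun n => ∫ x in E, f n x ∂μ) atTop (𝓝 (∫ x in E, fbar x ∂μ))) :
    ∀ᵐ x ∂μ, c ≤ fbar x := by
  have h0 : 0 ≤ᵐ[μ] fun x => fbar x - c := by
    apply ae_nonneg_of_forall_setIntegral_nonneg
      (show Integrable (fun x => fbar x - c) μ by exact hfbar.sub (integrable_const c))
    intro E hE hEfin
    have hint : ∫ x in E, (fbar x - c) ∂μ
        = ∫ x in E, fbar x ∂μ - c * (μ E).toReal := by
      rw [integral_sub hfbar.integrableOn (integrableOn_const hEfin.ne),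
        setIntegral_const]
      simp [smul_eq_mul, mul_comm, Measure.real]
    have hlow : ∀ n, c * (μ E).toReal ≤ ∫ x in E, f n x ∂μ := by
      intro n
      have : ∫ x in E, (fun _ => c) x ∂μ ≤ ∫ x in E, f n x ∂μ :=
        setIntegral_mono_on (integrableOn_const hEfin.ne) ((hfi n).integrableOn)
          hE (fun x _ => hc n x)
      simpa [setIntegral_const, smul_eq_mul, mul_comm, Measure.real] using this
    have := ge_of_tendsto (hconv E hE) (Eventually.of_forall hlow)
    rw [hint]
    linarith
  filter_upwards [h0] with x hx
  simpa using hx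
  
/-- Helper pointwise lemma: the key elementary fact about monotone continuous functions. -/
lemma aux_pointwise (I : Set ℝ) (hI : I.OrdConnected) (hne : I.Nonempty)
    (p G : ℝ → ℝ) (hp : MonotoneOn p I) (hpc : ContinuousOn p I)
    (hG : MonotoneOn G I) (hGc : ContinuousOn G I)
    (a g H : ℝ)
    (H1 : ∀ s ∈ I, a * G s + p s * g - p s * G s ≤ H)
    (H2 : BddBelow (p '' I) → sInf (p '' I) ≤ a)
    (H3 : BddAbove (p '' I) → a ≤ sSup (p '' I))
    (H4 : BddBelow (G '' I) → sInf (G '' I) ≤ g)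
    (H5 : BddAbove (G '' I) → g ≤ sSup (G '' I)) :
    a * g ≤ H := by
  by_cases hc1 : (∃ s ∈ I, p s ≤ a) ∧ (∃ t ∈ I, a ≤ p t)
  · obtain ⟨⟨s, hs, hsa⟩, ⟨t, ht, hta⟩⟩ := hc1
    rcases le_total s t with hst | hst
    · have hsub : Set.Icc s t ⊆ I := hI.out hs ht
      have hmem : a ∈ Set.Icc (p s) (p t) := ⟨hsa, hta⟩
      obtain ⟨u, hu, hua⟩ := intermediate_value_Icc hst (hpc.mono hsub) hmem
      have h := H1 u (hsub hu)
      rw [hua] at h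
      linarith
    · have h1 : p t ≤ p s := hp ht hs hst
      have hps : p s = a := le_antisymm hsa (le_trans hta h1)
      have h := H1 s hs
      rw [hps] at h
      linarith
  by_cases hc2 : (∃ s ∈ I, G s ≤ g) ∧ (∃ t ∈ I, g ≤ G t)
  · obtain ⟨⟨s, hs, hsa⟩, ⟨t, ht, hta⟩⟩ := hc2
    rcases le_total s t with hst | hst
    · have hsub : Set.Icc s t ⊆ I := hI.out hs ht
      have hmem : g ∈ Set.Icc (G s) (G t) := ⟨hsa, hta⟩
      obtain ⟨u, hu, hua⟩ := intermediate_value_Icc hst (hGc.mono hsub) hmem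
      have h := H1 u (hsub hu)
      rw [hua] at h
      linarith
    · have h1 : G t ≤ G s := hG ht hs hst
      have hgs : G s = g := le_antisymm hsa (le_trans hta h1)
      have h := H1 s hs
      rw [hgs] at h
      linarith
  -- remaining cases: ε argument
  have hsuff : ∀ ε > (0:ℝ), a * g ≤ H + ε := by
    intro ε hε
    suffices hkey : ∃ s ∈ I, (a - p s) * (g - G s) ≤ ε by
      obtain ⟨s, hs, hle⟩ := hkey
      have h := H1 s hs
      nlinarith
    rcases not_and_or.mp hc1 with h1 | h1 <;> push_neg at h1
    · -- ∀ s ∈ I, a < p s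
      by_cases h2 : ∃ s ∈ I, G s ≤ g
      · obtain ⟨s, hs, hGs⟩ := h2
        refine ⟨s, hs, ?_⟩
        have := h1 s hs
        nlinarith
      · push_neg at h2  -- ∀ s ∈ I, g < G s
        have hbbp : BddBelow (p '' I) := ⟨a, by rintro b ⟨s, hs, rfl⟩; exact (h1 s hs).le⟩
        have hbbG : BddBelow (G '' I) := ⟨g, by rintro b ⟨s, hs, rfl⟩; exact (h2 s hs).le⟩
        have ha : a = sInf (p '' I) :=
          le_antisymm (le_csInf (hne.image p) (by rintro b ⟨s, hs, rfl⟩; exact (h1 s hs).le))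
            (H2 hbbp)
        have hg : g = sInf (G '' I) :=
          le_antisymm (le_csInf (hne.image G) (by rintro b ⟨s, hs, rfl⟩; exact (h2 s hs).le))
            (H4 hbbG)
        obtain ⟨b1, hb1m, hb1⟩ := exists_lt_of_csInf_lt (hne.image p)
          (show sInf (p '' I) < a + 1 by rw [← ha]; linarith)
        obtain ⟨s₁, hs₁, rfl⟩ := hb1m
        obtain ⟨b2, hb2m, hb2⟩ := exists_lt_of_csInf_lt (hne.image G)
          (show sInf (G '' I) < g + ε by rw [← hg]; linarith)
        obtain ⟨s₂, hs₂, rfl⟩ := hb2m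
        rcases le_total s₁ s₂ with h12 | h12
        · refine ⟨s₁, hs₁, ?_⟩
          have hG1 : G s₁ ≤ G s₂ := hG hs₁ hs₂ h12
          have := h1 s₁ hs₁
          have := h2 s₁ hs₁
          nlinarith
        · refine ⟨s₂, hs₂, ?_⟩
          have hp1 : p s₂ ≤ p s₁ := hp hs₂ hs₁ h12
          have := h1 s₂ hs₂
          have := h2 s₂ hs₂
          nlinarith
    · -- ∀ t ∈ I, p t < a
      by_cases h2 : ∃ s ∈ I, g ≤ G s
      · obtain ⟨s, hs, hGs⟩ := h2
        refine ⟨s, hs, ?_⟩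
        have := h1 s hs
        nlinarith
      · push_neg at h2  -- ∀ s ∈ I, G s < g
        have hbap : BddAbove (p '' I) := ⟨a, by rintro b ⟨s, hs, rfl⟩; exact (h1 s hs).le⟩
        have hbaG : BddAbove (G '' I) := ⟨g, by rintro b ⟨s, hs, rfl⟩; exact (h2 s hs).le⟩
        have ha : a = sSup (p '' I) :=
          le_antisymm (H3 hbap)
            (csSup_le (hne.image p) (by rintro b ⟨s, hs, rfl⟩; exact (h1 s hs).le))
        have hg : g = sSup (G '' I) :=
          le_antisymm (H5 hbaG)
            (csSup_le (hne.image G) (by rintro b ⟨s, hs, rfl⟩; exact (h2 s hs).le))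
        obtain ⟨b1, hb1m, hb1⟩ := exists_lt_of_lt_csSup (hne.image p)
          (show a - 1 < sSup (p '' I) by rw [← ha]; linarith)
        obtain ⟨s₁, hs₁, rfl⟩ := hb1m
        obtain ⟨b2, hb2m, hb2⟩ := exists_lt_of_lt_csSup (hne.image G)
          (show g - ε < sSup (G '' I) by rw [← hg]; linarith)
        obtain ⟨s₂, hs₂, rfl⟩ := hb2m
        rcases le_total s₁ s₂ with h12 | h12
        · refine ⟨s₂, hs₂, ?_⟩
          have hp1 : p s₁ ≤ p s₂ := hp hs₁ hs₂ h12
          have := h1 s₂ hs₂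
          have := h2 s₂ hs₂
          nlinarith
        · refine ⟨s₁, hs₁, ?_⟩
          have hG1 : G s₂ ≤ G s₁ := hG hs₂ hs₁ h12
          have := h1 s₁ hs₁
          have := h2 s₁ hs₁
          nlinarith
  have : a * g ≤ H := by
    by_contra hcon
    push_neg at hcon
    have := hsuff ((a * g - H) / 2) (by linarith)
    linarith
  exact this

/-- Feireisl–Novotný, Theorem 10.19. Let `μ` be a finite measure,
`p, G` nondecreasing continuous functions on an interval `I ⊆ ℝ`, and `ϱ_n : X → I`
measurable with `p(ϱ_n) ⇀ P̄`, `G(ϱ_n) ⇀ Ḡ`, `p(ϱ_n)G(ϱ_n) ⇀ H̄` weakly in `L¹(μ)`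
(tested against bounded measurable functions). Then `P̄·Ḡ ≤ H̄` a.e. -/
theorem stmt_13 {X : Type*} [MeasurableSpace X] (μ : Measure X) [IsFiniteMeasure μ]
    (I : Set ℝ) (hI : I.OrdConnected)
    (p G : ℝ → ℝ)
    (hp : MonotoneOn p I) (hpc : ContinuousOn p I)
    (hG : MonotoneOn G I) (hGc : ContinuousOn G I)
    (ϱ : ℕ → X → ℝ) (hmeas : ∀ n, Measurable (ϱ n)) (hmem : ∀ n x, ϱ n x ∈ I)
    (Pbar Gbar Hbar : X → ℝ)
    (hPbar : Integrable Pbar μ) (hGbar : Integrable Gbar μ) (hHbar : Integrable Hbar μ)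
    (hip : ∀ n, Integrable (fun x => p (ϱ n x)) μ)
    (hiG : ∀ n, Integrable (fun x => G (ϱ n x)) μ)
    (hipG : ∀ n, Integrable (fun x => p (ϱ n x) * G (ϱ n x)) μ)
    (hwp : ∀ φ : X → ℝ, Measurable φ → (∃ C : ℝ, ∀ x, |φ x| ≤ C) →
      Tendsto (fun n => ∫ x, p (ϱ n x) * φ x ∂μ) atTop (𝓝 (∫ x, Pbar x * φ x ∂μ)))
    (hwG : ∀ φ : X → ℝ, Measurable φ → (∃ C : ℝ, ∀ x, |φ x| ≤ C) →
      Tendsto (fun n => ∫ x, G (ϱ n x) * φ x ∂μ) atTop (𝓝 (∫ x, Gbar x * φ x ∂μ)))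
    (hwpG : ∀ φ : X → ℝ, Measurable φ → (∃ C : ℝ, ∀ x, |φ x| ≤ C) →
      Tendsto (fun n => ∫ x, p (ϱ n x) * G (ϱ n x) * φ x ∂μ) atTop
        (𝓝 (∫ x, Hbar x * φ x ∂μ))) :
    ∀ᵐ x ∂μ, Pbar x * Gbar x ≤ Hbar x := by
  rcases isEmpty_or_nonempty X with hX | hX
  · filter_upwards with x; exact isEmptyElim x
  have hne : I.Nonempty := ⟨ϱ 0 (Classical.arbitrary X), hmem 0 _⟩
  -- set-integral versions of the weak convergences
  have hTest : ∀ (F : ℕ → X → ℝ) (Fbar : X → ℝ),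
      (∀ φ : X → ℝ, Measurable φ → (∃ C : ℝ, ∀ x, |φ x| ≤ C) →
        Tendsto (fun n => ∫ x, F n x * φ x ∂μ) atTop (𝓝 (∫ x, Fbar x * φ x ∂μ))) →
      ∀ E, MeasurableSet E →
        Tendsto (fun n => ∫ x in E, F n x ∂μ) atTop (𝓝 (∫ x in E, Fbar x ∂μ)) := by
    intro F Fbar hF E hE
    have hφ : Measurable (E.indicator (fun _ => (1:ℝ))) := measurable_const.indicator hE
    have hb : ∃ C : ℝ, ∀ x, |E.indicator (fun _ => (1:ℝ)) x| ≤ C :=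
      ⟨1, fun x => by by_cases h : x ∈ E <;> simp [Set.indicator_apply, h]⟩
    have key : ∀ f : X → ℝ, ∫ x, f x * E.indicator (fun _ => (1:ℝ)) x ∂μ = ∫ x in E, f x ∂μ := by
      intro f
      rw [← integral_indicator hE]
      congr 1
      ext x
      by_cases h : x ∈ E <;> simp [Set.indicator_apply, h]
    have := hF _ hφ hb
    simp only [key] at this
    exact this
  have hWp := hTest _ _ hwp
  have hWG := hTest _ _ hwG
  have hWpG := hTest _ _ hwpG
  -- Step B: for every s ∈ I the a.e. inequality holds
  have hkey : ∀ s ∈ I, ∀ᵐ x ∂μ, Pbar x * G s + p s * Gbar x - p s * G s ≤ Hbar x := by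
    intro s hs
    set c := p s with hc
    set d := G s with hd
    have h0 : 0 ≤ᵐ[μ] fun x => Hbar x - d * Pbar x - c * Gbar x + c * d := by
      apply ae_nonneg_of_forall_setIntegral_nonneg
        (show Integrable (fun x => Hbar x - d * Pbar x - c * Gbar x + c * d) μ by
          exact (((hHbar.sub (hPbar.const_mul d)).sub (hGbar.const_mul c)).add
            (integrable_const _)))
      intro E hE hEfin
      have hA : ∫ x in E, (Hbar x - d * Pbar x - c * Gbar x + c * d) ∂μ
          = ∫ x in E, Hbar x ∂μ - d * ∫ x in E, Pbar x ∂μ - c * ∫ x in E, Gbar x ∂μ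
            + c * d * (μ E).toReal := by
        have := aux_split (μ.restrict E) Hbar Pbar Gbar c d
          hHbar.integrableOn hPbar.integrableOn hGbar.integrableOn
        simpa [Measure.restrict_apply_univ] using this
      have hBn : ∀ n, ∫ x in E, (p (ϱ n x) - c) * (G (ϱ n x) - d) ∂μ
          = ∫ x in E, p (ϱ n x) * G (ϱ n x) ∂μ - d * ∫ x in E, p (ϱ n x) ∂μ
            - c * ∫ x in E, G (ϱ n x) ∂μ + c * d * (μ E).toReal := by
        intro n
        have heq : (fun x => (p (ϱ n x) - c) * (G (ϱ n x) - d))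
            = fun x => p (ϱ n x) * G (ϱ n x) - d * p (ϱ n x) - c * G (ϱ n x) + c * d := by
          funext x; ring
        rw [heq]
        have := aux_split (μ.restrict E) (fun x => p (ϱ n x) * G (ϱ n x))
          (fun x => p (ϱ n x)) (fun x => G (ϱ n x)) c d
          (hipG n).integrableOn (hip n).integrableOn (hiG n).integrableOn
        simpa [Measure.restrict_apply_univ] using this
      have hnonneg : ∀ n, 0 ≤ ∫ x in E, (p (ϱ n x) - c) * (G (ϱ n x) - d) ∂μ := by
        intro n
        apply setIntegral_nonneg hE
        intro x _
        rcases le_total (ϱ n x) s with h | h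
        · have h1 : p (ϱ n x) ≤ c := hp (hmem n x) hs h
          have h2 : G (ϱ n x) ≤ d := hG (hmem n x) hs h
          nlinarith
        · have h1 : c ≤ p (ϱ n x) := hp hs (hmem n x) h
          have h2 : d ≤ G (ϱ n x) := hG hs (hmem n x) h
          exact mul_nonneg (by linarith) (by linarith)
      have hlim : Tendsto (fun n => ∫ x in E, p (ϱ n x) * G (ϱ n x) ∂μ
            - d * ∫ x in E, p (ϱ n x) ∂μ - c * ∫ x in E, G (ϱ n x) ∂μ + c * d * (μ E).toReal)
          atTop (𝓝 (∫ x in E, Hbar x ∂μ - d * ∫ x in E, Pbar x ∂μ - c * ∫ x in E, Gbar x ∂μ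
            + c * d * (μ E).toReal)) :=
        (((hWpG E hE).sub ((hWp E hE).const_mul d)).sub ((hWG E hE).const_mul c)).add
          tendsto_const_nhds
      have hge := ge_of_tendsto hlim (Eventually.of_forall (fun n => by
        rw [← hBn n]; exact hnonneg n))
      rw [hA]
      exact hge
    filter_upwards [h0] with x hx
    simp only [Pi.zero_apply] at hx
    nlinarith [hx]
  -- countable dense subset of I
  obtain ⟨D, hDI, hDc, hDd⟩ :=
    (TopologicalSpace.IsSeparable.of_separableSpace I).exists_countable_dense_subset
  have hkeyD : ∀ᵐ x ∂μ, ∀ s ∈ D, Pbar x * G s + p s * Gbar x - p s * G s ≤ Hbar x :=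
    (ae_ball_iff hDc).mpr (fun s hs => hkey s (hDI hs))
  -- a.e. bounds on Pbar and Gbar
  have hlowP : ∀ᵐ x ∂μ, BddBelow (p '' I) → sInf (p '' I) ≤ Pbar x := by
    by_cases hb : BddBelow (p '' I)
    · have := aux_ae_ge μ (fun n x => p (ϱ n x)) Pbar hPbar (sInf (p '' I))
        (fun n x => csInf_le hb ⟨_, hmem n x, rfl⟩) hip hWp
      filter_upwards [this] with x hx _
      exact hx
    · filter_upwards with x h; exact absurd h hb
  have hlowG : ∀ᵐ x ∂μ, BddBelow (G '' I) → sInf (G '' I) ≤ Gbar x := by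
    by_cases hb : BddBelow (G '' I)
    · have := aux_ae_ge μ (fun n x => G (ϱ n x)) Gbar hGbar (sInf (G '' I))
        (fun n x => csInf_le hb ⟨_, hmem n x, rfl⟩) hiG hWG
      filter_upwards [this] with x hx _
      exact hx
    · filter_upwards with x h; exact absurd h hb
  have hupP : ∀ᵐ x ∂μ, BddAbove (p '' I) → Pbar x ≤ sSup (p '' I) := by
    by_cases hb : BddAbove (p '' I)
    · have := aux_ae_ge μ (fun n x => -(p (ϱ n x))) (fun x => -(Pbar x)) hPbar.neg
        (-(sSup (p '' I)))
        (fun n x => neg_le_neg (le_csSup hb ⟨_, hmem n x, rfl⟩))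
        (fun n => (hip n).neg)
        (fun E hE => by
          simp only [integral_neg]
          exact (hWp E hE).neg)
      filter_upwards [this] with x hx _
      linarith
    · filter_upwards with x h; exact absurd h hb
  have hupG : ∀ᵐ x ∂μ, BddAbove (G '' I) → Gbar x ≤ sSup (G '' I) := by
    by_cases hb : BddAbove (G '' I)
    · have := aux_ae_ge μ (fun n x => -(G (ϱ n x))) (fun x => -(Gbar x)) hGbar.neg
        (-(sSup (G '' I)))
        (fun n x => neg_le_neg (le_csSup hb ⟨_, hmem n x, rfl⟩))
        (fun n => (hiG n).neg)
        (fun E hE => by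
          simp only [integral_neg]
          exact (hWG E hE).neg)
      filter_upwards [this] with x hx _
      linarith
    · filter_upwards with x h; exact absurd h hb
  -- combine
  filter_upwards [hkeyD, hlowP, hupP, hlowG, hupG] with x h1 h2 h3 h4 h5
  apply aux_pointwise I hI hne p G hp hpc hG hGc (Pbar x) (Gbar x) (Hbar x) ?_ h2 h3 h4 h5
  intro s hs
  have hsD : s ∈ closure D := hDd hs
  obtain ⟨u, hu, hconv⟩ := mem_closure_iff_seq_limit.mp hsD
  have huI : Tendsto u atTop (𝓝[I] s) :=
    tendsto_nhdsWithin_iff.mpr ⟨hconv, Eventually.of_forall (fun n => hDI (hu n))⟩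
  have hpu : Tendsto (fun n => p (u n)) atTop (𝓝 (p s)) := (hpc s hs).tendsto.comp huI
  have hGu : Tendsto (fun n => G (u n)) atTop (𝓝 (G s)) := (hGc s hs).tendsto.comp huI
  have hall : ∀ n, Pbar x * G (u n) + p (u n) * Gbar x - p (u n) * G (u n) ≤ Hbar x :=
    fun n => h1 _ (hu n)
  exact le_of_tendsto
    (((tendsto_const_nhds.mul hGu).add (hpu.mul tendsto_const_nhds)).sub (hpu.mul hGu))
    (Eventually.of_forall hall)
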